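/- Assume users are ordered so that p_k/n̄_k is non-increasing and define n̂_k = (N − ∑_{k'<k} n̄_{k'})·p_k/(∑_{k'≥k} p_{k'}). The maximum sum rate of the multi-code CDMA system with no oversized user (n̂_k ≤ n̄_k for all k) equals the MAC sum capacity (1/2)·log(1 + (∑_k p_k)/σ²) per chip; moreover, N·p₁/(∑_k p_k) ≤ n̄₁ is necessary and sufficient for this equality. -/

import Mathlib

/-- Due number of multi-codes `n̂_k` of user `k`: remaining dimensions after earlier users
take their upper limits, shared proportionally to power among users `k, …, K`. -/
noncomputable def nhat (K N : ℕ) (p : Fin K → ℝ) (nb : Fin K → ℕ) (k : Fin K) : ℝ :=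
  ((N : ℝ) - ∑ k' ∈ Finset.univ.filter (fun k' : Fin K => k' < k), (nb k' : ℝ)) * p k /
    (∑ k' ∈ Finset.univ.filter (fun k' : Fin K => k ≤ k'), p k')

/-- If no user is oversized (`n̂_k ≤ n̄_k` for all `k`), the maximum multi-code CDMA sum rate
equals the MAC sum capacity `(1/2)·log₂(1 + ∑p/σ²)` per chip; moreover this equality holds
iff `N·p₁/∑p ≤ n̄₁`. -/
theorem stmt_12 (K N : ℕ) (hK : 0 < K) (hN : 0 < N) (p : Fin K → ℝ) (hp : ∀ k, 0 < p k)
    (nb : Fin K → ℕ) (hnb : ∀ k, 0 < nb k) (s : ℝ) (hs : 0 < s)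
    (hord : ∀ i j : Fin K, i ≤ j → p j / (nb j : ℝ) ≤ p i / (nb i : ℝ))
    (K₁ : ℕ) (hK₁ : K₁ ≤ K)
    (hchar : ∀ k : Fin K, (nhat K N p nb k > (nb k : ℝ) ↔ (k : ℕ) < K₁)) :
    let C : ℝ :=
      (∑ k ∈ Finset.univ.filter (fun k : Fin K => (k : ℕ) < K₁),
        ((nb k : ℝ) / (2 * N)) * Real.logb 2 (1 + N * p k / (s * (nb k : ℝ)))) +
      (((N : ℝ) - ∑ k ∈ Finset.univ.filter (fun k : Fin K => (k : ℕ) < K₁), (nb k : ℝ)) /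
          (2 * N)) *
        Real.logb 2 (1 +
          N * (∑ k ∈ Finset.univ.filter (fun k : Fin K => K₁ ≤ (k : ℕ)), p k) /
          (s * ((N : ℝ) -
            ∑ k ∈ Finset.univ.filter (fun k : Fin K => (k : ℕ) < K₁), (nb k : ℝ))))
    ((∀ k : Fin K, nhat K N p nb k ≤ (nb k : ℝ)) →
      C = (1 / 2) * Real.logb 2 (1 + (∑ k, p k) / s)) ∧
    (C = (1 / 2) * Real.logb 2 (1 + (∑ k, p k) / s) ↔
      (N : ℝ) * p ⟨0, hK⟩ / (∑ k, p k) ≤ (nb ⟨0, hK⟩ : ℝ)) := by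
  intro C
  set k₀ : Fin K := ⟨0, hK⟩ with hk₀
  have hT : 0 < ∑ k, p k := Finset.sum_pos (fun k _ => hp k) ⟨k₀, Finset.mem_univ _⟩
  have hNpos : (0:ℝ) < N := by exact_mod_cast hN
  have hnhat0 : nhat K N p nb k₀ = (N:ℝ) * p k₀ / ∑ k, p k := by
    rw [nhat]
    have h1 : Finset.univ.filter (fun k' : Fin K => k' < k₀) = ∅ := by
      apply Finset.filter_false_of_mem; intro k' _
      simp [hk₀, Fin.lt_def]
    have h2 : Finset.univ.filter (fun k' : Fin K => k₀ ≤ k') = Finset.univ := by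
      apply Finset.filter_true_of_mem; intro k' _
      simp [hk₀, Fin.le_def]
    rw [h1, h2]; simp
  have hzero : K₁ = 0 → C = (1/2) * Real.logb 2 (1 + (∑ k, p k)/s) := by
    intro h0
    have h1 : Finset.univ.filter (fun k : Fin K => (k:ℕ) < K₁) = ∅ := by
      subst h0; simp
    have h2 : Finset.univ.filter (fun k : Fin K => K₁ ≤ (k:ℕ)) = Finset.univ := by
      subst h0; simp
    have hCeq : C =
      (∑ k ∈ Finset.univ.filter (fun k : Fin K => (k : ℕ) < K₁),
        ((nb k : ℝ) / (2 * N)) * Real.logb 2 (1 + N * p k / (s * (nb k : ℝ)))) +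
      (((N : ℝ) - ∑ k ∈ Finset.univ.filter (fun k : Fin K => (k : ℕ) < K₁), (nb k : ℝ)) /
          (2 * N)) *
        Real.logb 2 (1 +
          N * (∑ k ∈ Finset.univ.filter (fun k : Fin K => K₁ ≤ (k : ℕ)), p k) /
          (s * ((N : ℝ) -
            ∑ k ∈ Finset.univ.filter (fun k : Fin K => (k : ℕ) < K₁), (nb k : ℝ)))) := rfl
    rw [hCeq, h1, h2]
    simp only [Finset.sum_empty, sub_zero]
    rw [show (N:ℝ) * (∑ k, p k) / (s * N) = (∑ k, p k)/s by field_simp]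
    rw [show (N:ℝ)/(2*N) = 1/2 by field_simp]
    ring
  have hlt : ((nb k₀ : ℝ) < (N:ℝ) * p k₀ / ∑ k, p k) →
      C < (1/2) * Real.logb 2 (1 + (∑ k, p k)/s) := by
    intro hlt0
    have hK1pos : 0 < K₁ := by
      have h := (hchar k₀).mp (by rw [hnhat0]; exact hlt0)
      simpa [hk₀] using h
    -- remaining dimensions stay positive
    have hS : ∀ m, m ≤ K₁ →
        0 < (N:ℝ) - ∑ k ∈ Finset.univ.filter (fun k : Fin K => (k:ℕ) < m), (nb k:ℝ) := by
      intro m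
      induction m with
      | zero => intro _; simpa using hNpos
      | succ m ih =>
        intro hm
        have hmK1 : m < K₁ := hm
        have hmK : m < K := lt_of_lt_of_le hmK1 hK₁
        set km : Fin K := ⟨m, hmK⟩ with hkm
        have hprev := ih (le_of_lt hmK1)
        have hch := (hchar km).mpr (by simpa [hkm] using hmK1)
        rw [nhat] at hch
        have hfeq : Finset.univ.filter (fun k' : Fin K => k' < km)
            = Finset.univ.filter (fun k : Fin K => (k:ℕ) < m) := by
          apply Finset.filter_congr; intro k _; simp [Fin.lt_def, hkm]
        rw [hfeq] at hch
        set Sm := ∑ k ∈ Finset.univ.filter (fun k : Fin K => (k:ℕ) < m), (nb k:ℝ) with hSm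
        set P := ∑ k' ∈ Finset.univ.filter (fun k' : Fin K => km ≤ k'), p k' with hP
        have hPpos : 0 < P := Finset.sum_pos (fun k _ => hp k)
          ⟨km, by simp⟩
        have hpk : p km ≤ P := Finset.single_le_sum (f := p)
          (fun k _ => (hp k).le) (by simp)
        have hnb : (nb km : ℝ) < ((N:ℝ) - Sm) := by
          have h1 : (nb km : ℝ) < ((N:ℝ) - Sm) * p km / P := hch
          have h2 : ((N:ℝ) - Sm) * p km / P ≤ ((N:ℝ) - Sm) := by
            rw [div_le_iff₀ hPpos]
            have := mul_le_mul_of_nonneg_left hpk (le_of_lt hprev)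
            linarith
          linarith
        have hsplit : Finset.univ.filter (fun k : Fin K => (k:ℕ) < m + 1)
            = insert km (Finset.univ.filter (fun k : Fin K => (k:ℕ) < m)) := by
          ext k
          simp [Fin.ext_iff, hkm]
          omega
        rw [hsplit, Finset.sum_insert (by simp [hkm])]
        linarith
    have hCeq : C =
      (∑ k ∈ Finset.univ.filter (fun k : Fin K => (k : ℕ) < K₁),
        ((nb k : ℝ) / (2 * N)) * Real.logb 2 (1 + N * p k / (s * (nb k : ℝ)))) +
      (((N : ℝ) - ∑ k ∈ Finset.univ.filter (fun k : Fin K => (k : ℕ) < K₁), (nb k : ℝ)) /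
          (2 * N)) *
        Real.logb 2 (1 +
          N * (∑ k ∈ Finset.univ.filter (fun k : Fin K => K₁ ≤ (k : ℕ)), p k) /
          (s * ((N : ℝ) -
            ∑ k ∈ Finset.univ.filter (fun k : Fin K => (k : ℕ) < K₁), (nb k : ℝ)))) := rfl
    set F₁ := Finset.univ.filter (fun k : Fin K => (k:ℕ) < K₁) with hF₁def
    set F₂ := Finset.univ.filter (fun k : Fin K => K₁ ≤ (k:ℕ)) with hF₂def
    set S := ∑ k ∈ F₁, (nb k:ℝ) with hSdef
    set P₁ := ∑ k ∈ F₂, p k with hP₁def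
    have hNS : 0 < (N:ℝ) - S := by rw [hSdef, hF₁def]; exact hS K₁ le_rfl
    have hsne : s ≠ 0 := ne_of_gt hs
    have hNne : (N:ℝ) ≠ 0 := ne_of_gt hNpos
    have hNSne : (N:ℝ) - S ≠ 0 := ne_of_gt hNS
    have hP₁nn : 0 ≤ P₁ := Finset.sum_nonneg (fun k _ => (hp k).le)
    have hlog2 : 0 < Real.log 2 := Real.log_pos one_lt_two
    -- Jensen setup
    set w : Option (Fin K) → ℝ :=
      fun i => i.elim (((N:ℝ) - S)/N) (fun k => (nb k:ℝ)/N) with hwdef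
    set y : Option (Fin K) → ℝ :=
      fun i => i.elim (1 + (N:ℝ)*P₁/(s*((N:ℝ) - S)))
        (fun k => 1 + (N:ℝ)*p k/(s*(nb k:ℝ))) with hydef
    set t : Finset (Option (Fin K)) := insert none (F₁.image some) with htdef
    have hnone : (none : Option (Fin K)) ∉ F₁.image some := by simp
    have hsum_t : ∀ g : Option (Fin K) → ℝ,
        ∑ i ∈ t, g i = g none + ∑ k ∈ F₁, g (some k) := by
      intro g
      rw [htdef, Finset.sum_insert hnone,
        Finset.sum_image (fun x _ y _ h => Option.some_injective _ h)]
    have hw1 : ∑ i ∈ t, w i = 1 := by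
      rw [hsum_t]
      simp only [hwdef, Option.elim]
      rw [← Finset.sum_div, ← hSdef]
      field_simp
      ring
    have hwpos : ∀ i ∈ t, 0 < w i := by
      rintro (_|k) _
      · exact div_pos hNS hNpos
      · exact div_pos (by exact_mod_cast hnb k) hNpos
    have hymem : ∀ i ∈ t, y i ∈ Set.Ioi (0:ℝ) := by
      rintro (_|k) _
      · simp only [hydef, Option.elim, Set.mem_Ioi]
        have : 0 ≤ (N:ℝ)*P₁/(s*((N:ℝ) - S)) := by positivity
        linarith
      · simp only [hydef, Option.elim, Set.mem_Ioi]
        have hb : (0:ℝ) < nb k := by exact_mod_cast hnb k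
        have : 0 < (N:ℝ)*p k/(s*(nb k:ℝ)) := by
          have := hp k; positivity
        linarith
    have hfsplit : ∑ k ∈ F₁, p k + P₁ = ∑ k, p k := by
      rw [hP₁def, hF₁def, hF₂def]
      rw [show Finset.univ.filter (fun k : Fin K => K₁ ≤ (k:ℕ))
          = Finset.univ.filter (fun k : Fin K => ¬((k:ℕ) < K₁)) by
        ext k; simp [not_lt]]
      exact Finset.sum_filter_add_sum_filter_not _ _ _
    have hmean : ∑ i ∈ t, w i • y i = 1 + (∑ k, p k)/s := by
      rw [hsum_t]
      simp only [hwdef, hydef, Option.elim, smul_eq_mul]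
      have h1 : ((N:ℝ) - S)/N * (1 + (N:ℝ)*P₁/(s*((N:ℝ) - S)))
          = ((N:ℝ) - S)/N + P₁/s := by field_simp
      have h2 : ∀ k ∈ F₁, (nb k:ℝ)/N * (1 + (N:ℝ)*p k/(s*(nb k:ℝ)))
          = (nb k:ℝ)/N + p k/s := by
        intro k _
        have hb : (nb k:ℝ) ≠ 0 := ne_of_gt (by exact_mod_cast hnb k)
        field_simp
      rw [h1, Finset.sum_congr rfl h2, Finset.sum_add_distrib,
        ← Finset.sum_div, ← Finset.sum_div, ← hSdef, ← hfsplit]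
      field_simp
      ring
    have hk0F : k₀ ∈ F₁ := by
      rw [hF₁def]; simp [hk₀]; exact hK1pos
    have hk0t : (some k₀) ∈ t := by
      rw [htdef]
      exact Finset.mem_insert_of_mem (Finset.mem_image_of_mem some hk0F)
    have hnb0 : (0:ℝ) < nb k₀ := by exact_mod_cast hnb k₀
    have hneq : ∃ j ∈ t, ∃ l ∈ t, y j ≠ y l := by
      by_contra hcon
      push_neg at hcon
      have hconst : ∀ i ∈ t, y i = y (some k₀) := fun i hi => hcon i hi _ hk0t
      have hsum : ∑ i ∈ t, w i • y i = y (some k₀) := by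
        rw [Finset.sum_congr rfl (fun i hi => by rw [hconst i hi]),
          ← Finset.sum_smul, hw1, one_smul]
      rw [hmean] at hsum
      simp only [hydef, Option.elim] at hsum
      have h1 : (∑ k, p k) < (N:ℝ)*p k₀/(nb k₀:ℝ) := by
        rw [lt_div_iff₀ hnb0]
        have := (lt_div_iff₀ hT).mp hlt0
        linarith
      have h1' : (∑ k, p k) * (nb k₀:ℝ) < (N:ℝ) * p k₀ := (lt_div_iff₀ hnb0).mp h1
      have hsum' : (∑ k, p k) / s = (N:ℝ) * p k₀ / (s * (nb k₀:ℝ)) := by linarith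
      rw [div_eq_div_iff hsne (by positivity)] at hsum'
      nlinarith [hs, hnb0]
    have hJ := strictConcaveOn_log_Ioi.lt_map_sum hwpos hw1 hymem hneq
    rw [hmean] at hJ
    simp only [smul_eq_mul] at hJ
    have hterm : ∀ k ∈ F₁, ((nb k:ℝ)/(2*(N:ℝ))) * Real.logb 2 (1 + (N:ℝ)*p k/(s*(nb k:ℝ)))
        = ((nb k:ℝ)/(N:ℝ) * Real.log (1 + (N:ℝ)*p k/(s*(nb k:ℝ)))) / (2*Real.log 2) := by
      intro k _
      simp only [Real.logb]; ring
    have hCval : C = (∑ i ∈ t, w i * Real.log (y i)) / (2 * Real.log 2) := by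
      rw [hCeq, Finset.sum_congr rfl hterm, hsum_t (fun i => w i * Real.log (y i))]
      simp only [hwdef, hydef, Option.elim, Real.logb]
      rw [add_div, ← Finset.sum_div]
      ring
    rw [hCval, show (1:ℝ)/2 * Real.logb 2 (1 + (∑ k, p k)/s)
        = Real.log (1 + (∑ k, p k)/s) / (2 * Real.log 2) by
      simp only [Real.logb]; ring]
    gcongr
  refine ⟨?_, ?_, ?_⟩
  · intro hall
    apply hzero
    by_contra h0
    have hK1pos : 0 < K₁ := Nat.pos_of_ne_zero h0
    have := (hchar k₀).mpr (by simpa [hk₀] using hK1pos)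
    exact absurd (hall k₀) (not_le.mpr this)
  · intro hCeq
    by_contra hlt'
    push_neg at hlt'
    exact absurd hCeq (hlt hlt').ne
  · intro hle
    apply hzero
    by_contra h0
    have hK1pos : 0 < K₁ := Nat.pos_of_ne_zero h0
    have h := (hchar k₀).mpr (by simpa [hk₀] using hK1pos)
    rw [hnhat0] at h
    exact absurd hle (not_le.mpr h)
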